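/- arXiv:1412.5413 — 13 statements merged into one kernel-verified Lean document; each statement's English description precedes it below -/
import Mathlib

section
/- Let a, b, and c be positive real numbers such that a + b + c = 1. Then a/b + a/c + b/c + b/a + c/b + c/a + 6 ≥ 2√2·(√((1−a)/a) + √((1−b)/b) + √((1−c)/c)). -/
lemma key (x : ℝ) (hx : 0 ≤ x) : 2 * Real.sqrt 2 * Real.sqrt x ≤ x + 2 := by
  nlinarith [sq_nonneg (Real.sqrt x - Real.sqrt 2), Real.sq_sqrt hx,
    Real.sq_sqrt (by norm_num : (0:ℝ) ≤ 2), Real.sqrt_nonneg x, Real.sqrt_nonneg 2]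

theorem stmt_0 (a b c : ℝ) (ha : 0 < a) (hb : 0 < b) (hc : 0 < c)
    (habc : a + b + c = 1) :
    a / b + a / c + b / c + b / a + c / b + c / a + 6 ≥
      2 * Real.sqrt 2 *
        (Real.sqrt ((1 - a) / a) + Real.sqrt ((1 - b) / b) + Real.sqrt ((1 - c) / c)) := by
  have h1 : (0:ℝ) ≤ (1 - a) / a := by
    apply div_nonneg (by linarith) ha.le
  have h2 : (0:ℝ) ≤ (1 - b) / b := by
    apply div_nonneg (by linarith) hb.le
  have h3 : (0:ℝ) ≤ (1 - c) / c := by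
    apply div_nonneg (by linarith) hc.le
  have k1 := key _ h1
  have k2 := key _ h2
  have k3 := key _ h3
  have e1 : (1 - a) / a = b / a + c / a := by field_simp; linarith
  have e2 : (1 - b) / b = a / b + c / b := by field_simp; linarith
  have e3 : (1 - c) / c = a / c + b / c := by field_simp; linarith
  rw [e1] at k1; rw [e2] at k2; rw [e3] at k3; rw [e1, e2, e3]
  linarith
end

section
/- For all real numbers a, b, c, d each ≥ −1, one has a³ + b³ + c³ + d³ + 1 ≥ (3/4)·(a + b + c + d). -/
theorem stmt_2 (a b c d : ℝ) (ha : -1 ≤ a) (hb : -1 ≤ b) (hc : -1 ≤ c) (hd : -1 ≤ d) :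
    a ^ 3 + b ^ 3 + c ^ 3 + d ^ 3 + 1 ≥ (3 / 4) * (a + b + c + d) := by
  nlinarith [mul_nonneg (by linarith : (0:ℝ) ≤ a + 1) (sq_nonneg (a - 1/2)),
    mul_nonneg (by linarith : (0:ℝ) ≤ b + 1) (sq_nonneg (b - 1/2)),
    mul_nonneg (by linarith : (0:ℝ) ≤ c + 1) (sq_nonneg (c - 1/2)),
    mul_nonneg (by linarith : (0:ℝ) ≤ d + 1) (sq_nonneg (d - 1/2))]
end

section
/- If k is a real number such that a³ + b³ + c³ + d³ + 1 ≥ k·(a + b + c + d) holds for all real numbers a, b, c, d each ≥ −1, then k = 3/4. Equivalently, k = 3/4 is the unique real number for which this inequality holds for all such a, b, c, d. -/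
theorem stmt_3 (k : ℝ) :
    (∀ a b c d : ℝ, -1 ≤ a → -1 ≤ b → -1 ≤ c → -1 ≤ d →
      a ^ 3 + b ^ 3 + c ^ 3 + d ^ 3 + 1 ≥ k * (a + b + c + d)) ↔ k = 3 / 4 := by
  constructor
  · intro h
    have h1 := h (1/2) (1/2) (1/2) (1/2) (by norm_num) (by norm_num) (by norm_num) (by norm_num)
    have h2 := h (-1) (-1) (-1) (-1) (by norm_num) (by norm_num) (by norm_num) (by norm_num)
    nlinarith
  · rintro rfl a b c d ha hb hc hd
    nlinarith [mul_nonneg (by linarith : (0:ℝ) ≤ a + 1) (sq_nonneg (a - 1/2)),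
      mul_nonneg (by linarith : (0:ℝ) ≤ b + 1) (sq_nonneg (b - 1/2)),
      mul_nonneg (by linarith : (0:ℝ) ≤ c + 1) (sq_nonneg (c - 1/2)),
      mul_nonneg (by linarith : (0:ℝ) ≤ d + 1) (sq_nonneg (d - 1/2))]
end

section
/- Let a, b, c be positive real numbers. Then √(a/(b+c)) + √(b/(c+a)) + √(c/(a+b)) > 2. -/
lemma key_le (x y : ℝ) (hx : 0 < x) (hy : 0 < y) :
    2*x/(x+y) ≤ Real.sqrt (x/y) := by
  rw [Real.le_sqrt (by positivity)]
  rw [div_pow, div_le_div_iff₀ (by positivity) hy]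
  nlinarith [sq_nonneg (x - y), sq_nonneg (x + y)]
  positivity

lemma key_lt (x y : ℝ) (hx : 0 < x) (hy : 0 < y) (hne : x ≠ y) :
    2*x/(x+y) < Real.sqrt (x/y) := by
  rw [show 2*x/(x+y) = Real.sqrt ((2*x/(x+y))^2) by
      rw [Real.sqrt_sq (by positivity)]]
  apply Real.sqrt_lt_sqrt (by positivity)
  rw [div_pow, div_lt_div_iff₀ (by positivity) hy]
  have hz : x - y ≠ 0 := sub_ne_zero.mpr hne
  have : (x - y)^2 > 0 := by positivity
  nlinarith [sq_nonneg (x + y)]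

theorem stmt_5 (a b c : ℝ) (ha : 0 < a) (hb : 0 < b) (hc : 0 < c) :
    Real.sqrt (a / (b + c)) + Real.sqrt (b / (c + a)) + Real.sqrt (c / (a + b)) > 2 := by
  have hsum : 2*a/(a+(b+c)) + 2*b/(b+(c+a)) + 2*c/(c+(a+b)) = 2 := by
    field_simp
    ring
  have h1 := key_le a (b+c) ha (by linarith)
  have h2 := key_le b (c+a) hb (by linarith)
  have h3 := key_le c (a+b) hc (by linarith)
  by_cases hab : a = b + c
  · have hne : b ≠ c + a := by intro h; rw [hab] at h; linarith
    have h2' := key_lt b (c+a) hb (by linarith) hne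
    linarith
  · have h1' := key_lt a (b+c) ha (by linarith) hab
    linarith
end

section
/- Let a, b, c, d be positive real numbers such that a² + b² + c² + d² = 1. Then √(1−a) + √(1−b) + √(1−c) + √(1−d) ≥ √a + √b + √c + √d. -/
lemma key_s7 (x : ℝ) (hx : 0 < x) (hx1 : x < 1) :
    Real.sqrt (1 - x) - Real.sqrt x ≥ Real.sqrt 2 * (1/4 - x^2) := by
  set u := Real.sqrt (1 - x) with hu
  set v := Real.sqrt x with hv
  have hu0 : 0 ≤ u := Real.sqrt_nonneg _
  have hv0 : 0 ≤ v := Real.sqrt_nonneg _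
  have hu2 : u ^ 2 = 1 - x := Real.sq_sqrt (by linarith)
  have hv2 : v ^ 2 = x := Real.sq_sqrt hx.le
  have hs2 : Real.sqrt 2 ^ 2 = 2 := Real.sq_sqrt (by norm_num)
  have hs0 : 0 < Real.sqrt 2 := Real.sqrt_pos.mpr (by norm_num)
  have h1 : u ^ 2 = 1 - v ^ 2 := by rw [hu2, hv2]
  have hid : Real.sqrt 2 * (1/4 - x^2) =
      (u - v) * (Real.sqrt 2 * (u + v) * (v^2 + 1/2)) / 2 := by
    rw [← hv2]
    linear_combination (-(Real.sqrt 2) * (v^2 + 1/2) / 2) * h1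
  rw [hid]
  rcases le_total v u with hcase | hcase
  · have hb : Real.sqrt 2 * (u + v) * (v^2 + 1/2) ≤ 2 := by
      nlinarith [sq_nonneg (u - v), sq_nonneg (Real.sqrt 2 - (u+v)), sq_nonneg (u+v), mul_nonneg hu0 hv0]
    nlinarith
  · have hv12 : 1/2 ≤ v^2 := by nlinarith
    have hP0 : 0 ≤ (u + v) * (v^2 + 1/2) := by positivity
    have hPsq : 2 ≤ ((u + v) * (v^2 + 1/2))^2 := by
      nlinarith [mul_nonneg hu0 hv0, sq_nonneg (u - v), mul_nonneg (mul_nonneg hu0 hv0) (sub_nonneg.mpr hv12), sq_nonneg (v^2 - 1/2), sq_nonneg u, mul_nonneg (sq_nonneg u) (sub_nonneg.mpr hv12)]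
    have hP : Real.sqrt 2 ≤ (u + v) * (v^2 + 1/2) := by
      have := Real.sqrt_le_sqrt hPsq
      rwa [Real.sqrt_sq hP0] at this
    have hb : 2 ≤ Real.sqrt 2 * (u + v) * (v^2 + 1/2) := by
      nlinarith [mul_le_mul_of_nonneg_left hP hs0.le, hs2]
    nlinarith

theorem stmt_7 (a b c d : ℝ) (ha : 0 < a) (hb : 0 < b) (hc : 0 < c) (hd : 0 < d)
    (h : a ^ 2 + b ^ 2 + c ^ 2 + d ^ 2 = 1) :
    Real.sqrt (1 - a) + Real.sqrt (1 - b) + Real.sqrt (1 - c) + Real.sqrt (1 - d) ≥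
      Real.sqrt a + Real.sqrt b + Real.sqrt c + Real.sqrt d := by
  have ha1 : a < 1 := by nlinarith
  have hb1 : b < 1 := by nlinarith
  have hc1 : c < 1 := by nlinarith
  have hd1 : d < 1 := by nlinarith
  have ka := key_s7 a ha ha1
  have kb := key_s7 b hb hb1
  have kc := key_s7 c hc hc1
  have kd := key_s7 d hd hd1
  have : Real.sqrt 2 * (1/4 - a^2) + Real.sqrt 2 * (1/4 - b^2) +
      Real.sqrt 2 * (1/4 - c^2) + Real.sqrt 2 * (1/4 - d^2) = 0 := by
    have : (1/4 - a^2) + (1/4 - b^2) + (1/4 - c^2) + (1/4 - d^2) = 0 := by linarith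
    linear_combination Real.sqrt 2 * this
  linarith
end

section
/- For every real number x with 0 < x < 1, one has √(1−x) − √x ≥ −√2·(x² − 1/4). -/
lemma poly_aux8 (x : ℝ) (h : 1/2 < x) (hx1 : x < 1) :
    (2*x + 1)^2 * (1 + 4*x*(1-x)) ≥ 8 := by
  nlinarith [mul_nonneg (mul_nonneg (by linarith : (0:ℝ) ≤ 2*x - 1) (by linarith : (0:ℝ) ≤ 1 - x)) (by positivity : (0:ℝ) ≤ 8*x^2 + 12*x + 6)]

lemma alg_aux8 (x a b c : ℝ) (hx0 : 0 < x) (hx1 : x < 1)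
    (ha2 : a ^ 2 = x) (hb2 : b ^ 2 = 1 - x) (hc2 : c ^ 2 = 2)
    (ha0 : 0 < a) (hb0 : 0 < b) (hc0 : 0 < c) :
    b - a ≥ -c * (x ^ 2 - 1 / 4) := by
  have hs0 : 0 < a + b := by linarith
  have hprod : (b - a) * (a + b) = 1 - 2 * x := by linear_combination hb2 - ha2
  have hs2 : (a + b) ^ 2 = 1 + 2 * (a * b) := by linear_combination ha2 + hb2
  have hab0 : 0 < a * b := mul_pos ha0 hb0
  have hab1 : 2 * (a * b) ≤ 1 := by nlinarith [sq_nonneg (a - b)]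
  have habx : (a * b) ^ 2 = x * (1 - x) := by rw [mul_pow, ha2, hb2]
  rcases le_or_gt x (1 / 2) with h | h
  · have hsc : a + b ≤ c := by nlinarith [sq_nonneg (a - b)]
    have hba : a ≤ b := by nlinarith
    have hkey : c * (1 / 4 - x ^ 2) * (a + b) ≤ 1 - 2 * x := by
      nlinarith [mul_nonneg (sub_nonneg.mpr hba) (sub_nonneg.mpr hsc),
        mul_nonneg (mul_nonneg (sub_nonneg.mpr hba) hc0.le) (sub_nonneg.mpr hsc),
        sq_nonneg (2*x - 1), mul_pos hc0 hs0]
    have hfin : 0 ≤ (b - a + c * (x ^ 2 - 1/4)) * (a + b) := by nlinarith [hkey, hprod]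
    have := (mul_nonneg_iff_of_pos_right hs0).mp hfin
    linarith
  · have habl : 2 * x * (1 - x) ≤ a * b := by
      nlinarith [mul_nonneg hab0.le (by linarith : (0:ℝ) ≤ 1 - 2*(a*b))]
    have hpoly : (2*x + 1)^2 * (1 + 4*x*(1-x)) ≥ 8 := poly_aux8 x h hx1
    have e1 : ((2*x + 1) * (a + b))^2 = (2*x + 1)^2 * (1 + 2*(a*b)) := by
      rw [mul_pow, hs2]
    have e2 : (2*x + 1)^2 * (1 + 4*x*(1-x)) ≤ (2*x + 1)^2 * (1 + 2*(a*b)) :=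
      mul_le_mul_of_nonneg_left (by linarith) (sq_nonneg _)
    have e3 : (2*c)^2 = 8 := by rw [mul_pow, hc2]; norm_num
    have hsq : ((2*x + 1) * (a + b))^2 ≥ (2*c)^2 := by rw [e1, e3]; linarith
    have hkey2 : (2*x + 1) * (a + b) ≥ 2*c := by
      have hp : (0:ℝ) ≤ (2*x + 1) * (a + b) := mul_nonneg (by linarith) hs0.le
      calc 2*c = Real.sqrt ((2*c)^2) := (Real.sqrt_sq (by linarith)).symm
        _ ≤ Real.sqrt (((2*x + 1) * (a + b))^2) := Real.sqrt_le_sqrt hsq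
        _ = (2*x + 1) * (a + b) := Real.sqrt_sq hp
    have hkey : c * (1 / 4 - x ^ 2) * (a + b) ≤ 1 - 2 * x := by
      clear hprod hs2 hab0 hab1 habx habl hpoly e1 e2 e3 hsq hs0 ha2 hb2 ha0 hb0 hx0
      nlinarith [mul_nonneg (mul_nonneg (by linarith : (0:ℝ) ≤ 2*x-1) hc0.le) (sub_nonneg.mpr hkey2), hc2, hc0.le]
    have hfin : 0 ≤ (b - a + c * (x ^ 2 - 1/4)) * (a + b) := by
      clear hs2 hab0 hab1 habx habl hpoly e1 e2 e3 hsq hkey2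
      nlinarith [hkey, hprod]
    have := (mul_nonneg_iff_of_pos_right hs0).mp hfin
    linarith

theorem stmt_8 (x : ℝ) (hx0 : 0 < x) (hx1 : x < 1) :
    Real.sqrt (1 - x) - Real.sqrt x ≥ -Real.sqrt 2 * (x ^ 2 - 1 / 4) := by
  exact alg_aux8 x (Real.sqrt x) (Real.sqrt (1 - x)) (Real.sqrt 2) hx0 hx1
    (Real.sq_sqrt hx0.le) (Real.sq_sqrt (by linarith)) (Real.sq_sqrt (by norm_num))
    (Real.sqrt_pos.mpr hx0) (Real.sqrt_pos.mpr (by linarith)) (Real.sqrt_pos.mpr (by norm_num))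
end

section
/- Let a, b, c be positive real numbers such that abc ≥ 1. Then (a + 1/(a+1))·(b + 1/(b+1))·(c + 1/(c+1)) ≥ 27/8. -/
lemma key_9 (x : ℝ) (hx : 0 < x) : x + 1 / (x + 1) ≥ 3 / 2 * Real.sqrt x := by
  set t := Real.sqrt x with ht
  have ht0 : 0 < t := Real.sqrt_pos.mpr hx
  have ht2 : t ^ 2 = x := Real.sq_sqrt hx.le
  have hx1 : 0 < x + 1 := by linarith
  rw [ge_iff_le, ← sub_nonneg]
  have h : x + 1 / (x + 1) - 3 / 2 * t = ((t - 1)^2 * (2*t^2 + t + 2)) / (2 * (x + 1)) := by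
    rw [← ht2]
    have : (0:ℝ) < t^2 + 1 := by positivity
    field_simp
    ring
  rw [h]
  positivity

theorem stmt_9 (a b c : ℝ) (ha : 0 < a) (hb : 0 < b) (hc : 0 < c) (habc : a * b * c ≥ 1) :
    (a + 1 / (a + 1)) * (b + 1 / (b + 1)) * (c + 1 / (c + 1)) ≥ 27 / 8 := by
  have ka := key_9 a ha
  have kb := key_9 b hb
  have kc := key_9 c hc
  have sa : 0 < Real.sqrt a := Real.sqrt_pos.mpr ha
  have sb : 0 < Real.sqrt b := Real.sqrt_pos.mpr hb
  have sc : 0 < Real.sqrt c := Real.sqrt_pos.mpr hc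
  have hs : Real.sqrt a * Real.sqrt b * Real.sqrt c = Real.sqrt (a*b*c) := by
    rw [← Real.sqrt_mul ha.le, ← Real.sqrt_mul (by positivity)]
  have hs1 : Real.sqrt (a*b*c) ≥ 1 := by
    rw [show (1:ℝ) = Real.sqrt 1 by simp]
    exact Real.sqrt_le_sqrt habc
  have h1 : (a + 1 / (a + 1)) * (b + 1 / (b + 1)) * (c + 1 / (c + 1)) ≥
      (3/2 * Real.sqrt a) * (3/2 * Real.sqrt b) * (3/2 * Real.sqrt c) := by
    have p1 : 0 < 3/2 * Real.sqrt a := by positivity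
    have p2 : 0 < 3/2 * Real.sqrt b := by positivity
    have p3 : 0 < 3/2 * Real.sqrt c := by positivity
    gcongr <;> positivity
  calc (a + 1 / (a + 1)) * (b + 1 / (b + 1)) * (c + 1 / (c + 1))
      ≥ (3/2 * Real.sqrt a) * (3/2 * Real.sqrt b) * (3/2 * Real.sqrt c) := h1
    _ = 27/8 * Real.sqrt (a*b*c) := by rw [← hs]; ring
    _ ≥ 27/8 * 1 := by linarith
    _ = 27/8 := by ring
end

section
/- For all positive real numbers a, b, c, one has 3a/(b+c) + 4b/(c+a) + 5c/(a+b) ≥ (√3 + 2 + √5)²/2 − 12. -/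
theorem stmt_11 (a b c : ℝ) (ha : 0 < a) (hb : 0 < b) (hc : 0 < c) :
    3 * a / (b + c) + 4 * b / (c + a) + 5 * c / (a + b) ≥
      (Real.sqrt 3 + 2 + Real.sqrt 5) ^ 2 / 2 - 12 := by
  set x := b + c with hxd
  set y := c + a with hyd
  set z := a + b with hzd
  have hx : 0 < x := by positivity
  have hy : 0 < y := by positivity
  have hz : 0 < z := by positivity
  have h3 : Real.sqrt 3 ^ 2 = 3 := Real.sq_sqrt (by norm_num)
  have h5 : Real.sqrt 5 ^ 2 = 5 := Real.sq_sqrt (by norm_num)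
  have h3n : 0 ≤ Real.sqrt 3 := Real.sqrt_nonneg 3
  have h5n : 0 ≤ Real.sqrt 5 := Real.sqrt_nonneg 5
  have e1 : (Real.sqrt 3 * y - 2 * x) ^ 2 = 3 * y ^ 2 - 4 * Real.sqrt 3 * (x * y) + 4 * x ^ 2 := by
    linear_combination y ^ 2 * h3
  have e2 : (Real.sqrt 3 * z - Real.sqrt 5 * x) ^ 2 =
      3 * z ^ 2 - 2 * (Real.sqrt 3 * Real.sqrt 5) * (x * z) + 5 * x ^ 2 := by
    linear_combination z ^ 2 * h3 + x ^ 2 * h5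
  have e3 : (2 * z - Real.sqrt 5 * y) ^ 2 = 4 * z ^ 2 - 4 * Real.sqrt 5 * (y * z) + 5 * y ^ 2 := by
    linear_combination y ^ 2 * h5
  have hexp : (Real.sqrt 3 + 2 + Real.sqrt 5) ^ 2 =
      12 + 4 * Real.sqrt 3 + 4 * Real.sqrt 5 + 2 * (Real.sqrt 3 * Real.sqrt 5) := by
    linear_combination h3 + h5
  have k1 : 0 ≤ 3 * y ^ 2 - 4 * Real.sqrt 3 * (x * y) + 4 * x ^ 2 := e1 ▸ sq_nonneg _
  have k2 : 0 ≤ 3 * z ^ 2 - 2 * (Real.sqrt 3 * Real.sqrt 5) * (x * z) + 5 * x ^ 2 :=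
    e2 ▸ sq_nonneg _
  have k3 : 0 ≤ 4 * z ^ 2 - 4 * Real.sqrt 5 * (y * z) + 5 * y ^ 2 := e3 ▸ sq_nonneg _
  have key : (x + y + z) * (3 * y * z + 4 * x * z + 5 * x * y) ≥
      (Real.sqrt 3 + 2 + Real.sqrt 5) ^ 2 * (x * y * z) := by
    rw [hexp]
    nlinarith [mul_nonneg hz.le k1, mul_nonneg hy.le k2, mul_nonneg hx.le k3]
  have ha' : 3 * a / x = 3 * (x + y + z) / (2 * x) - 3 := by
    field_simp; ring
  have hb' : 4 * b / y = 4 * (x + y + z) / (2 * y) - 4 := by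
    field_simp; ring
  have hc' : 5 * c / z = 5 * (x + y + z) / (2 * z) - 5 := by
    field_simp; ring
  rw [ha', hb', hc', ge_iff_le, ← sub_nonneg]
  have e : 3 * (x + y + z) / (2 * x) - 3 + (4 * (x + y + z) / (2 * y) - 4) +
      (5 * (x + y + z) / (2 * z) - 5) -
      ((Real.sqrt 3 + 2 + Real.sqrt 5) ^ 2 / 2 - 12) =
      ((x + y + z) * (3 * y * z + 4 * x * z + 5 * x * y) -
        (Real.sqrt 3 + 2 + Real.sqrt 5) ^ 2 * (x * y * z)) / (2 * (x * y * z)) := by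
    field_simp; ring
  rw [e]
  apply div_nonneg (by linarith) (by positivity)
end

section
/- The infimum over all positive real numbers a, b, c of 3a/(b+c) + 4b/(c+a) + 5c/(a+b) equals (√3 + 2 + √5)²/2 − 12, and this value is attained (e.g. at a = 2 + √5 − √3, b = √3 − 2 + √5, c = √3 + 2 − √5). -/
theorem stmt_12 :
    IsLeast
      {y : ℝ | ∃ a b c : ℝ, 0 < a ∧ 0 < b ∧ 0 < c ∧
        y = 3 * a / (b + c) + 4 * b / (c + a) + 5 * c / (a + b)}
      ((Real.sqrt 3 + 2 + Real.sqrt 5) ^ 2 / 2 - 12) := by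
  have hx : Real.sqrt 3 ^ 2 = 3 := Real.sq_sqrt (by norm_num)
  have hy : Real.sqrt 5 ^ 2 = 5 := Real.sq_sqrt (by norm_num)
  have hx0 : 0 ≤ Real.sqrt 3 := Real.sqrt_nonneg 3
  have hy0 : 0 ≤ Real.sqrt 5 := Real.sqrt_nonneg 5
  constructor
  · refine ⟨2 + Real.sqrt 5 - Real.sqrt 3, Real.sqrt 3 - 2 + Real.sqrt 5,
      Real.sqrt 3 + 2 - Real.sqrt 5, ?_, ?_, ?_, ?_⟩
    · nlinarith [hx, hy, hx0, hy0]
    · nlinarith [hx, hy, hx0, hy0]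
    · nlinarith [hx, hy, hx0, hy0]
    · have h1 : (Real.sqrt 3 - 2 + Real.sqrt 5) + (Real.sqrt 3 + 2 - Real.sqrt 5)
          = 2 * Real.sqrt 3 := by ring
      have h2 : (Real.sqrt 3 + 2 - Real.sqrt 5) + (2 + Real.sqrt 5 - Real.sqrt 3)
          = 4 := by ring
      have h3 : (2 + Real.sqrt 5 - Real.sqrt 3) + (Real.sqrt 3 - 2 + Real.sqrt 5)
          = 2 * Real.sqrt 5 := by ring
      rw [h1, h2, h3]
      have hx0' : (0:ℝ) < Real.sqrt 3 := Real.sqrt_pos.mpr (by norm_num)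
      have hy0' : (0:ℝ) < Real.sqrt 5 := Real.sqrt_pos.mpr (by norm_num)
      field_simp
      nlinarith [hx, hy, hx0', hy0', mul_pos hx0' hy0']
  · rintro y ⟨a, b, c, ha, hb, hc, rfl⟩
    have hu : 0 < b + c := by linarith
    have hv : 0 < c + a := by linarith
    have hw : 0 < a + b := by linarith
    rw [show 3 * a / (b + c) + 4 * b / (c + a) + 5 * c / (a + b)
        = (3 * a * ((c + a) * (a + b)) + 4 * b * ((b + c) * (a + b))
            + 5 * c * ((b + c) * (c + a))) / ((b + c) * ((c + a) * (a + b))) by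
      field_simp]
    rw [le_div_iff₀ (by positivity)]
    have h1 : 4 * Real.sqrt 3 * ((b + c) * (c + a)) ≤ 3 * (c + a) ^ 2 + 4 * (b + c) ^ 2 := by
      nlinarith [sq_nonneg (Real.sqrt 3 * (c + a) - 2 * (b + c)), hx, sq_nonneg (c + a)]
    have h2 : 2 * (Real.sqrt 3 * Real.sqrt 5) * ((b + c) * (a + b)) ≤ 3 * (a + b) ^ 2 + 5 * (b + c) ^ 2 := by
      nlinarith [sq_nonneg (Real.sqrt 3 * (a + b) - Real.sqrt 5 * (b + c)), hx, hy, sq_nonneg (a + b), sq_nonneg (b + c)]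
    have h3 : 4 * Real.sqrt 5 * ((c + a) * (a + b)) ≤ 4 * (a + b) ^ 2 + 5 * (c + a) ^ 2 := by
      nlinarith [sq_nonneg (2 * (a + b) - Real.sqrt 5 * (c + a)), hy, sq_nonneg (c + a)]
    have H1 : 0 ≤ (a + b) * (3 * (c + a) ^ 2 + 4 * (b + c) ^ 2 - 4 * Real.sqrt 3 * ((b + c) * (c + a))) :=
      mul_nonneg hw.le (by linarith)
    have H2 : 0 ≤ (c + a) * (3 * (a + b) ^ 2 + 5 * (b + c) ^ 2 - 2 * (Real.sqrt 3 * Real.sqrt 5) * ((b + c) * (a + b))) :=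
      mul_nonneg hv.le (by linarith)
    have H3 : 0 ≤ (b + c) * (4 * (a + b) ^ 2 + 5 * (c + a) ^ 2 - 4 * Real.sqrt 5 * ((c + a) * (a + b))) :=
      mul_nonneg hu.le (by linarith)
    have hM : (Real.sqrt 3 + 2 + Real.sqrt 5) ^ 2 / 2 - 12
        = 2 * Real.sqrt 3 + 2 * Real.sqrt 5 + Real.sqrt 3 * Real.sqrt 5 - 6 := by
      linear_combination hx / 2 + hy / 2
    rw [hM]
    nlinarith [H1, H2, H3]
end

section
/- Let a, b, c be positive real numbers such that ab + bc + ca = 3. Then (a⁷ − a⁴ + 3)·(b⁵ − b² + 3)·(c⁴ − c + 3) ≥ 27. -/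
set_option maxHeartbeats 1000000

private lemma amgm3 (x y z : ℝ) (hx : 0 ≤ x) (hy : 0 ≤ y) (hz : 0 ≤ z) :
    3 * (x * y * z) ≤ x ^ 3 + y ^ 3 + z ^ 3 := by
  nlinarith [mul_nonneg (add_nonneg (add_nonneg hx hy) hz)
    (by nlinarith [sq_nonneg (x - y), sq_nonneg (y - z), sq_nonneg (x - z)] :
      (0:ℝ) ≤ x ^ 2 + y ^ 2 + z ^ 2 - x * y - y * z - x * z)]

theorem stmt_13 (a b c : ℝ) (ha : 0 < a) (hb : 0 < b) (hc : 0 < c)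
    (h : a * b + b * c + c * a = 3) :
    (a ^ 7 - a ^ 4 + 3) * (b ^ 5 - b ^ 2 + 3) * (c ^ 4 - c + 3) ≥ 27 := by
  have ha1 : a ^ 7 - a ^ 4 + 3 ≥ a ^ 3 + 2 := by
    nlinarith [mul_nonneg (mul_nonneg (sq_nonneg (a - 1)) (by positivity : (0:ℝ) ≤ a ^ 3 + a ^ 2 + a + 1)) (by positivity : (0:ℝ) ≤ a ^ 2 + a + 1)]
  have hb1 : b ^ 5 - b ^ 2 + 3 ≥ b ^ 3 + 2 := by
    nlinarith [mul_nonneg (mul_nonneg (sq_nonneg (b - 1)) (by positivity : (0:ℝ) ≤ b + 1)) (by positivity : (0:ℝ) ≤ b ^ 2 + b + 1)]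
  have hc1 : c ^ 4 - c + 3 ≥ c ^ 3 + 2 := by
    nlinarith [mul_nonneg (sq_nonneg (c - 1)) (by positivity : (0:ℝ) ≤ c ^ 2 + c + 1)]
  have hpb : (0:ℝ) < b ^ 3 + 2 := by positivity
  have hpc : (0:ℝ) < c ^ 3 + 2 := by positivity
  have hs : a + b + c ≥ 3 := by nlinarith [sq_nonneg (a - b), sq_nonneg (b - c), sq_nonneg (a - c)]
  have h1 := amgm3 a (a*b) 1 ha.le (by positivity) zero_le_one
  have h2 := amgm3 b (a*b) 1 hb.le (by positivity) zero_le_one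
  have h3 := amgm3 b (b*c) 1 hb.le (by positivity) zero_le_one
  have h4 := amgm3 c (b*c) 1 hc.le (by positivity) zero_le_one
  have h5 := amgm3 c (c*a) 1 hc.le (by positivity) zero_le_one
  have h6 := amgm3 a (c*a) 1 ha.le (by positivity) zero_le_one
  have h7 := amgm3 a b c ha.le hb.le hc.le
  have h8 := amgm3 (a*b*c) 1 1 (by positivity) zero_le_one zero_le_one
  have hhold : (a ^ 3 + 2) * (b ^ 3 + 2) * (c ^ 3 + 2) ≥ (a + b + c) ^ 3 := by
    nlinarith [h1, h2, h3, h4, h5, h6, h7, h8]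
  have h27 : (a + b + c) ^ 3 ≥ 27 := by nlinarith
  calc (a ^ 7 - a ^ 4 + 3) * (b ^ 5 - b ^ 2 + 3) * (c ^ 4 - c + 3)
      ≥ (a ^ 3 + 2) * (b ^ 3 + 2) * (c ^ 3 + 2) := by
        have hfa : (0:ℝ) ≤ a ^ 7 - a ^ 4 + 3 := by nlinarith [pow_pos ha 3]
        have hfb : (0:ℝ) ≤ b ^ 5 - b ^ 2 + 3 := by nlinarith [pow_pos hb 3]
        exact mul_le_mul (mul_le_mul ha1 hb1 hpb.le hfa) hc1 hpc.le (mul_nonneg hfa hfb)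
    _ ≥ 27 := le_trans h27 hhold
end

section
/- Let a, b, c, d be positive real numbers. Then a/(b+c+d) + b/(c+d+a) + c/(d+a+b) + d/(a+b+c) + (b+c+d)/a + (c+d+a)/b + (d+a+b)/c + (a+b+c)/d ≥ 40/3, with equality when a = b = c = d. In particular the minimum value of this expression over positive a, b, c, d is 40/3. -/
private lemma pairineq (x y : ℝ) (hx : 0 < x) (hy : 0 < y) : x / y + y / x ≥ 2 := by
  rw [ge_iff_le, div_add_div _ _ hy.ne' hx.ne', le_div_iff₀ (by positivity)]
  nlinarith [sq_nonneg (x - y)]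

private lemma amgm9 (x y : ℝ) (hx : 0 < x) (hy : 0 < y) : x / y + y / (9 * x) ≥ 2 / 3 := by
  rw [ge_iff_le, div_add_div _ _ hy.ne' (by positivity), div_le_div_iff₀ (by norm_num) (by positivity)]
  nlinarith [sq_nonneg (3 * x - y)]

private lemma mainineq : ∀ a b c d : ℝ, 0 < a → 0 < b → 0 < c → 0 < d →
      a / (b + c + d) + b / (c + d + a) + c / (d + a + b) + d / (a + b + c) +
        (b + c + d) / a + (c + d + a) / b + (d + a + b) / c + (a + b + c) / d ≥ 40 / 3 := by
  intro a b c d ha hb hc hd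
  have h1 := amgm9 a (b + c + d) ha (by linarith)
  have h2 := amgm9 b (c + d + a) hb (by linarith)
  have h3 := amgm9 c (d + a + b) hc (by linarith)
  have h4 := amgm9 d (a + b + c) hd (by linarith)
  have p1 := pairineq a b ha hb
  have p2 := pairineq a c ha hc
  have p3 := pairineq a d ha hd
  have p4 := pairineq b c hb hc
  have p5 := pairineq b d hb hd
  have p6 := pairineq c d hc hd
  have e1 : (b + c + d) / a = b / a + c / a + d / a := by ring
  have e2 : (c + d + a) / b = c / b + d / b + a / b := by ring
  have e3 : (d + a + b) / c = d / c + a / c + b / c := by ring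
  have e4 : (a + b + c) / d = a / d + b / d + c / d := by ring
  have q1 : (b + c + d) / (9 * a) = (1/9) * (b / a + c / a + d / a) := by ring
  have q2 : (c + d + a) / (9 * b) = (1/9) * (c / b + d / b + a / b) := by ring
  have q3 : (d + a + b) / (9 * c) = (1/9) * (d / c + a / c + b / c) := by ring
  have q4 : (a + b + c) / (9 * d) = (1/9) * (a / d + b / d + c / d) := by ring
  rw [q1] at h1; rw [q2] at h2; rw [q3] at h3; rw [q4] at h4
  rw [e1, e2, e3, e4]
  linarith

theorem stmt_15 :
    (∀ a b c d : ℝ, 0 < a → 0 < b → 0 < c → 0 < d →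
      a / (b + c + d) + b / (c + d + a) + c / (d + a + b) + d / (a + b + c) +
        (b + c + d) / a + (c + d + a) / b + (d + a + b) / c + (a + b + c) / d ≥ 40 / 3) ∧
    (∀ a b c d : ℝ, 0 < a → 0 < b → 0 < c → 0 < d → a = b → b = c → c = d →
      a / (b + c + d) + b / (c + d + a) + c / (d + a + b) + d / (a + b + c) +
        (b + c + d) / a + (c + d + a) / b + (d + a + b) / c + (a + b + c) / d = 40 / 3) ∧
    IsLeast
      {y : ℝ | ∃ a b c d : ℝ, 0 < a ∧ 0 < b ∧ 0 < c ∧ 0 < d ∧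
        y = a / (b + c + d) + b / (c + d + a) + c / (d + a + b) + d / (a + b + c) +
          (b + c + d) / a + (c + d + a) / b + (d + a + b) / c + (a + b + c) / d}
      (40 / 3) := by
  refine ⟨mainineq, ?_, ?_, ?_⟩
  · intro a b c d ha hb hc hd hab hbc hcd
    subst hab hbc hcd
    have : (0:ℝ) < a := ha
    field_simp
    ring
  · exact ⟨1, 1, 1, 1, one_pos, one_pos, one_pos, one_pos, by norm_num⟩
  · rintro y ⟨a, b, c, d, ha, hb, hc, hd, rfl⟩
    exact mainineq a b c d ha hb hc hd
end

section
/- Let a, b, c be positive real numbers such that a^(2/3) + b^(2/3) + c^(2/3) = 3. Then a² + b² + c² ≥ a^(4/3) + b^(4/3) + c^(4/3). -/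
lemma cube_eq (a : ℝ) (ha : 0 < a) : (a ^ ((2:ℝ)/3)) ^ 3 = a ^ 2 := by
  rw [← Real.rpow_natCast (a ^ ((2:ℝ)/3)) 3, ← Real.rpow_mul ha.le,
    ← Real.rpow_natCast a 2]
  norm_num

lemma sq_eq (a : ℝ) (ha : 0 < a) : (a ^ ((2:ℝ)/3)) ^ 2 = a ^ ((4:ℝ)/3) := by
  rw [← Real.rpow_natCast (a ^ ((2:ℝ)/3)) 2, ← Real.rpow_mul ha.le]
  norm_num

theorem stmt_17 (a b c : ℝ) (ha : 0 < a) (hb : 0 < b) (hc : 0 < c)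
    (h : a ^ ((2 : ℝ) / 3) + b ^ ((2 : ℝ) / 3) + c ^ ((2 : ℝ) / 3) = 3) :
    a ^ 2 + b ^ 2 + c ^ 2 ≥ a ^ ((4 : ℝ) / 3) + b ^ ((4 : ℝ) / 3) + c ^ ((4 : ℝ) / 3) := by
  set x := a ^ ((2:ℝ)/3) with hx
  set y := b ^ ((2:ℝ)/3) with hy
  set z := c ^ ((2:ℝ)/3) with hz
  have hxp : 0 < x := Real.rpow_pos_of_pos ha _
  have hyp : 0 < y := Real.rpow_pos_of_pos hb _
  have hzp : 0 < z := Real.rpow_pos_of_pos hc _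
  rw [← cube_eq a ha, ← cube_eq b hb, ← cube_eq c hc,
    ← sq_eq a ha, ← sq_eq b hb, ← sq_eq c hc]
  nlinarith [sq_nonneg (x-1), sq_nonneg (y-1), sq_nonneg (z-1),
    mul_nonneg (sq_nonneg (x-1)) (add_pos hxp one_pos).le,
    mul_nonneg (sq_nonneg (y-1)) (add_pos hyp one_pos).le,
    mul_nonneg (sq_nonneg (z-1)) (add_pos hzp one_pos).le]
end

section
/- Let a, b, c, d be positive real numbers. Then a/(b²+c²+d²) + b/(a²+c²+d²) + c/(a²+b²+d²) + d/(a²+b²+c²) ≥ 4/(a+b+c+d). -/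
lemma engel2 (a b x y : ℝ) (hx : 0 < x) (hy : 0 < y) :
    (a + b) ^ 2 / (x + y) ≤ a ^ 2 / x + b ^ 2 / y := by
  rw [div_add_div _ _ (ne_of_gt hx) (ne_of_gt hy), div_le_div_iff₀ (by positivity) (by positivity)]
  nlinarith [sq_nonneg (a * y - b * x), mul_pos hx hy]

theorem stmt_19 (a b c d : ℝ) (ha : 0 < a) (hb : 0 < b) (hc : 0 < c) (hd : 0 < d) :
    a / (b ^ 2 + c ^ 2 + d ^ 2) + b / (a ^ 2 + c ^ 2 + d ^ 2) +
      c / (a ^ 2 + b ^ 2 + d ^ 2) + d / (a ^ 2 + b ^ 2 + c ^ 2) ≥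
      4 / (a + b + c + d) := by
  set D1 := b ^ 2 + c ^ 2 + d ^ 2 with hD1
  set D2 := a ^ 2 + c ^ 2 + d ^ 2 with hD2
  set D3 := a ^ 2 + b ^ 2 + d ^ 2 with hD3
  set D4 := a ^ 2 + b ^ 2 + c ^ 2 with hD4
  have h1 : (0:ℝ) < D1 := by positivity
  have h2 : (0:ℝ) < D2 := by positivity
  have h3 : (0:ℝ) < D3 := by positivity
  have h4 : (0:ℝ) < D4 := by positivity
  have e1 : a / D1 = a ^ 2 / (a * D1) := by
    rw [sq, mul_div_mul_left _ _ (ne_of_gt ha)]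
  have e2 : b / D2 = b ^ 2 / (b * D2) := by
    rw [sq, mul_div_mul_left _ _ (ne_of_gt hb)]
  have e3 : c / D3 = c ^ 2 / (c * D3) := by
    rw [sq, mul_div_mul_left _ _ (ne_of_gt hc)]
  have e4 : d / D4 = d ^ 2 / (d * D4) := by
    rw [sq, mul_div_mul_left _ _ (ne_of_gt hd)]
  have c12 : (a + b) ^ 2 / (a * D1 + b * D2) ≤ a ^ 2 / (a * D1) + b ^ 2 / (b * D2) :=
    engel2 _ _ _ _ (by positivity) (by positivity)
  have c34 : (c + d) ^ 2 / (c * D3 + d * D4) ≤ c ^ 2 / (c * D3) + d ^ 2 / (d * D4) :=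
    engel2 _ _ _ _ (by positivity) (by positivity)
  have cA : (a + b + (c + d)) ^ 2 / (a * D1 + b * D2 + (c * D3 + d * D4)) ≤
      (a + b) ^ 2 / (a * D1 + b * D2) + (c + d) ^ 2 / (c * D3 + d * D4) :=
    engel2 _ _ _ _ (by positivity) (by positivity)
  have key : 4 * (a * D1 + b * D2 + (c * D3 + d * D4)) ≤ (a + b + c + d) ^ 3 := by
    rw [hD1, hD2, hD3, hD4]
    nlinarith [mul_nonneg ha.le (sq_nonneg (b + c + d - a)),
      mul_nonneg hb.le (sq_nonneg (a + c + d - b)),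
      mul_nonneg hc.le (sq_nonneg (a + b + d - c)),
      mul_nonneg hd.le (sq_nonneg (a + b + c - d))]
  have last : 4 / (a + b + c + d) ≤
      (a + b + (c + d)) ^ 2 / (a * D1 + b * D2 + (c * D3 + d * D4)) := by
    rw [div_le_div_iff₀ (by positivity) (by positivity)]
    nlinarith [key]
  rw [ge_iff_le, e1, e2, e3, e4]
  linarith [c12, c34, cA, last]
end
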